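/- Let T ⊂ ℝ^d be open with inscribed ball of radius r_T and contained in a ball of radius R_T ≤ ρ r_T, and set h_T = diam(T). Then for every polynomial v of degree ≤ k, one has ‖v‖_{L²(∂T)} ≤ (C/√h_T) ‖v‖_{L²(T)}, where C depends only on d, k, ρ and the constant ρ₃ in the surface-area bound |∂T| ≤ ρ₃ h_T^{d−1}. -/

import Mathlib

open MeasureTheory Metric MvPolynomial
open scoped ENNReal NNReal Pointwise


lemma totalDegree_bind1_le {d : ℕ} (g : Fin d → MvPolynomial (Fin d) ℝ)
    (hg : ∀ i, (g i).totalDegree ≤ 1) (v : MvPolynomial (Fin d) ℝ) :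
    (bind₁ g v).totalDegree ≤ v.totalDegree := by
  rw [bind₁, aeval_def, eval₂_eq]
  refine (totalDegree_finset_sum _ _).trans ?_
  apply Finset.sup_le
  intro m hm
  refine (totalDegree_mul _ _).trans ?_
  have h1 : (algebraMap ℝ (MvPolynomial (Fin d) ℝ) (coeff m v)).totalDegree = 0 := by
    rw [MvPolynomial.algebraMap_eq, totalDegree_C]
  rw [h1, zero_add]
  refine (totalDegree_finset_prod _ _).trans ?_
  calc ∑ i ∈ m.support, ((g i) ^ (m i)).totalDegree
      ≤ ∑ i ∈ m.support, m i :=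
        Finset.sum_le_sum fun i _ => (totalDegree_pow _ _).trans
          (by simpa using Nat.mul_le_mul_left (m i) (hg i))
    _ ≤ v.totalDegree := MvPolynomial.le_totalDegree hm

lemma cont_fe {d : ℕ} (v : MvPolynomial (Fin d) ℝ) :
    Continuous fun x : EuclideanSpace ℝ (Fin d) => eval (fun i => x i) v :=
  (MvPolynomial.continuous_eval v).comp (continuous_pi fun i => (EuclideanSpace.proj i).continuous)

lemma vanish_of_ball {d : ℕ} (v : MvPolynomial (Fin d) ℝ)
    (h : ∀ x ∈ Metric.ball (0 : EuclideanSpace ℝ (Fin d)) 1, eval (fun i => x i) v = 0) :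
    v = 0 := by
  have key : ∀ u : Fin d → ℝ, eval u v = 0 := by
    intro u
    set u' : EuclideanSpace ℝ (Fin d) := (WithLp.equiv 2 _).symm u with hu'
    set q : Polynomial ℝ := MvPolynomial.aeval (fun i => Polynomial.C (u i) * Polynomial.X) v with hq
    have hqeval : ∀ t : ℝ, q.eval t = eval (fun i => u i * t) v := by
      intro t
      have h1 : (Polynomial.aeval t)
            ((MvPolynomial.aeval (fun i => Polynomial.C (u i) * Polynomial.X)) v)
          = (MvPolynomial.aeval
              (fun i => (Polynomial.aeval t) (Polynomial.C (u i) * Polynomial.X))) v := by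
        rw [← AlgHom.comp_apply, MvPolynomial.comp_aeval]
      rw [hq, ← Polynomial.coe_aeval_eq_eval, h1]
      have h2 : (fun i => (Polynomial.aeval t) (Polynomial.C (u i) * Polynomial.X))
          = fun i => u i * t := by
        funext i; simp
      rw [h2, ← MvPolynomial.coe_aeval_eq_eval]
      rfl
    have hq0 : q = 0 := by
      apply Polynomial.eq_zero_of_infinite_isRoot
      have hsub : Set.Ioo (0:ℝ) ((‖u'‖ + 1)⁻¹) ⊆ {x | q.IsRoot x} := by
        intro t ht
        have htpos : 0 < t := ht.1
        have hnorm : ‖t • u'‖ < 1 := by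
          rw [norm_smul, Real.norm_of_nonneg htpos.le]
          have h1 : t < (‖u'‖ + 1)⁻¹ := ht.2
          have h2 : (0:ℝ) < ‖u'‖ + 1 := by positivity
          calc t * ‖u'‖ ≤ t * (‖u'‖ + 1) := by nlinarith
            _ < (‖u'‖ + 1)⁻¹ * (‖u'‖ + 1) := by
                apply mul_lt_mul_of_pos_right h1 h2
            _ = 1 := inv_mul_cancel₀ h2.ne'
        have hmem : t • u' ∈ Metric.ball (0 : EuclideanSpace ℝ (Fin d)) 1 := by
          rwa [Metric.mem_ball, dist_zero_right]
        have := h _ hmem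
        have hco : (fun i => (t • u') i) = fun i => u i * t := by
          funext i
          simp [hu', mul_comm]
        rw [hco] at this
        simpa [Polynomial.IsRoot, hqeval t] using this
      exact Set.Infinite.mono hsub (Set.Ioo_infinite (by positivity))
    have := hqeval 1
    rw [hq0] at this
    simpa using this.symm
  have : v = (0 : MvPolynomial (Fin d) ℝ) := MvPolynomial.funext (by simpa using key)
  exact this

set_option maxHeartbeats 1000000 in
lemma ref_ineq (d k : ℕ) (ρ : ℝ) :
    ∃ C₀ > (0:ℝ), ∀ v : MvPolynomial (Fin d) ℝ, v.totalDegree ≤ k →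
      ∀ x ∈ Metric.closedBall (0 : EuclideanSpace ℝ (Fin d)) (2*ρ),
        |eval (fun i => x i) v| ≤
          C₀ * (∫ y in Metric.ball (0 : EuclideanSpace ℝ (Fin d)) 1,
              (eval (fun i => y i) v)^2) ^ ((1:ℝ)/2) := by
  set E := EuclideanSpace ℝ (Fin d)
  set μ : Measure E := (volume : Measure E).restrict (Metric.ball (0:E) 1) with hμ
  haveI : IsFiniteMeasure μ := ⟨by
    rw [hμ, Measure.restrict_apply_univ]; exact measure_ball_lt_top⟩
  have hmem : ∀ v : MvPolynomial (Fin d) ℝ,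
      MemLp (fun x : E => eval (fun i => x i) v) 2 μ := by
    intro v
    obtain ⟨M, hM⟩ := (isCompact_closedBall (0:E) 1).exists_bound_of_continuousOn
      (cont_fe v).continuousOn
    exact MemLp.of_bound ((cont_fe v).aestronglyMeasurable.restrict) M
      ((ae_restrict_iff' measurableSet_ball).2
        (ae_of_all _ fun x hx => hM x (ball_subset_closedBall hx)))
  set P := MvPolynomial.restrictTotalDegree (Fin d) ℝ k with hP
  let J : P →ₗ[ℝ] Lp ℝ 2 μ :=
    { toFun := fun v => (hmem v.1).toLp _
      map_add' := by
        intro a b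
        rw [← MemLp.toLp_add (hmem a.1) (hmem b.1)]
        exact MemLp.toLp_congr (hmem _) _
          (Filter.EventuallyEq.of_eq (by funext x; simp))
      map_smul' := by
        intro c a
        rw [RingHom.id_apply, ← MemLp.toLp_const_smul c (hmem a.1)]
        exact MemLp.toLp_congr (hmem _) _
          (Filter.EventuallyEq.of_eq (by funext x; simp [MvPolynomial.smul_eval])) }
  have hJapp : ∀ v : P, J v = (hmem v.1).toLp _ := fun _ => rfl
  have hJinj : Function.Injective J := by
    rw [injective_iff_map_eq_zero]
    intro a ha
    have h0 : (fun x : E => eval (fun i => x i) a.1) =ᵐ[μ] 0 := by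
      refine ((hmem a.1).coeFn_toLp).symm.trans ?_
      rw [show (hmem a.1).toLp _ = J a from rfl, ha]
      exact Lp.coeFn_zero ℝ 2 μ
    have heq : Set.EqOn (fun x : E => eval (fun i => x i) a.1) 0 (Metric.ball (0:E) 1) :=
      Measure.eqOn_open_of_ae_eq h0 isOpen_ball (cont_fe _).continuousOn continuousOn_const
    exact Subtype.ext (vanish_of_ball _ (fun x hx => heq hx))
  have hJnorm : ∀ v : P,
      ‖J v‖ = (∫ y in Metric.ball (0:E) 1, (eval (fun i => y i) v.1)^2) ^ ((1:ℝ)/2) := by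
    intro v
    rw [hJapp, Lp.norm_toLp,
      MemLp.eLpNorm_eq_integral_rpow_norm (by norm_num) (by norm_num) (hmem v.1),
      ENNReal.toReal_ofReal]
    · have hfun : ∀ a : E, ‖eval (fun i => a i) v.1‖ ^ (2:ℝ≥0∞).toReal
          = (eval (fun i => a i) v.1)^2 := by
        intro a
        rw [show (2:ℝ≥0∞).toReal = (2:ℝ) by norm_num, Real.rpow_two, Real.norm_eq_abs, sq_abs]
      rw [show (2:ℝ≥0∞).toReal⁻¹ = (1:ℝ)/2 by norm_num]
      congr 1
      exact integral_congr_ae (ae_of_all _ hfun)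
    · exact Real.rpow_nonneg (integral_nonneg fun a => by positivity) _
  haveI : FiniteDimensional ℝ P := by rw [hP]; infer_instance
  let e : P ≃ₗ[ℝ] LinearMap.range J := LinearEquiv.ofInjective J hJinj
  haveI : FiniteDimensional ℝ (LinearMap.range J) := e.finiteDimensional
  haveI : CompactSpace (Metric.closedBall (0:E) (2*ρ)) :=
    isCompact_iff_compactSpace.mp (isCompact_closedBall _ _)
  let ι : P →ₗ[ℝ] C((Metric.closedBall (0:E) (2*ρ) : Set E), ℝ) :=
    { toFun := fun v => ⟨fun x => eval (fun i => (x:E) i) v.1,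
        ((cont_fe v.1).comp continuous_subtype_val)⟩
      map_add' := by intro a b; ext x; simp
      map_smul' := by intro c a; ext x; simp [MvPolynomial.smul_eval] }
  let L := LinearMap.toContinuousLinearMap (ι.comp e.symm.toLinearMap)
  refine ⟨‖L‖ + 1, by positivity, ?_⟩
  intro v hv x hx
  have hvmem : v ∈ P := by
    rw [hP]
    exact (MvPolynomial.mem_restrictTotalDegree _ _ _).2 hv
  set vP : P := ⟨v, hvmem⟩ with hvP
  have h1 : |eval (fun i => x i) v| ≤ ‖ι vP‖ := by
    have := (ι vP).norm_coe_le_norm ⟨x, hx⟩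
    simp only [Real.norm_eq_abs] at this
    exact this
  have h2 : ι vP = L (e vP) := by
    show ι vP = (ι.comp e.symm.toLinearMap) (e vP)
    simp
  have h3 : ‖L (e vP)‖ ≤ ‖L‖ * ‖e vP‖ := L.le_opNorm _
  have h4 : ‖e vP‖ = ‖J vP‖ := by
    rw [← Submodule.norm_coe (e vP)]
    congr 1
  have hN : (0:ℝ) ≤ ‖J vP‖ := norm_nonneg _
  have h5 : ‖ι vP‖ ≤ (‖L‖+1) * ‖J vP‖ := by
    rw [h2]
    refine (L.le_opNorm _).trans ?_
    rw [h4]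
    nlinarith [norm_nonneg L]
  refine (h1.trans h5).trans_eq ?_
  rw [hJnorm vP]

set_option maxHeartbeats 1600000 in
theorem stmt1_main (d k : ℕ) (hdpos : 0 < d) (ρ ρ₃ : ℝ) (hρ : 1 ≤ ρ) (hρ₃ : 0 < ρ₃)
    (C₀ : ℝ) (hC₀ : 0 < C₀)
    (href : ∀ v : MvPolynomial (Fin d) ℝ, v.totalDegree ≤ k →
      ∀ x ∈ Metric.closedBall (0 : EuclideanSpace ℝ (Fin d)) (2*ρ),
        |eval (fun i => x i) v| ≤
          C₀ * (∫ y in Metric.ball (0 : EuclideanSpace ℝ (Fin d)) 1,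
              (eval (fun i => y i) v)^2) ^ ((1:ℝ)/2))
    (tdb : ∀ (g : Fin d → MvPolynomial (Fin d) ℝ),
      (∀ i, (g i).totalDegree ≤ 1) → ∀ v : MvPolynomial (Fin d) ℝ,
      (bind₁ g v).totalDegree ≤ v.totalDegree)
    (cfe : ∀ v : MvPolynomial (Fin d) ℝ,
      Continuous fun x : EuclideanSpace ℝ (Fin d) => eval (fun i => x i) v) :
    ∃ C > (0 : ℝ),
      ∀ (T : Set (EuclideanSpace ℝ (Fin d))) (xin xc : EuclideanSpace ℝ (Fin d)) (r R : ℝ),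
        IsOpen T → 0 < r → Metric.ball xin r ⊆ T → T ⊆ Metric.ball xc R → R ≤ ρ * r →
        μH[(d : ℝ) - 1] (frontier T) ≤ ENNReal.ofReal (ρ₃ * (Metric.diam T) ^ (d - 1)) →
        ∀ v : MvPolynomial (Fin d) ℝ, v.totalDegree ≤ k →
          (∫ x in frontier T, (MvPolynomial.eval (fun i => x i) v) ^ 2 ∂μH[(d : ℝ) - 1]) ^ ((1:ℝ)/2)
            ≤ (C / Real.sqrt (Metric.diam T)) *
              (∫ x in T, (MvPolynomial.eval (fun i => x i) v) ^ 2) ^ ((1:ℝ)/2) := by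
  set E := EuclideanSpace ℝ (Fin d)
  refine ⟨C₀ * Real.sqrt ρ₃ * Real.sqrt ((2*ρ)^d), ?_, ?_⟩
  · have h2ρ : (0:ℝ) < 2*ρ := by linarith
    exact mul_pos (mul_pos hC₀ (Real.sqrt_pos.2 hρ₃)) (Real.sqrt_pos.2 (by positivity))
  intro T xin xc r R hT hr hball hsub hRρ hμH v hv
  set C : ℝ := C₀ * Real.sqrt ρ₃ * Real.sqrt ((2*ρ)^d) with hC
  have hρ0 : (0:ℝ) < ρ := lt_of_lt_of_le one_pos hρ
  have hxinT : xin ∈ T := hball (Metric.mem_ball_self hr)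
  have hR : 0 < R := lt_of_le_of_lt dist_nonneg (hsub hxinT)
  have hbdd : Bornology.IsBounded T := Metric.isBounded_ball.subset hsub
  set h : ℝ := Metric.diam T with hh
  have hh0le : (0:ℝ) ≤ h := Metric.diam_nonneg
  have hh2R : h ≤ 2*R := (Metric.diam_mono hsub Metric.isBounded_ball).trans (Metric.diam_ball hR.le)
  haveI : Nonempty (Fin d) := ⟨⟨0, hdpos⟩⟩
  have h2r : 2*r ≤ h := by
    by_contra hcon
    push_neg at hcon
    obtain ⟨t, ht1, ht2⟩ := exists_between (show h / 2 < r by linarith)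
    have ht0 : 0 ≤ t := le_trans (by positivity) ht1.le
    set u : E := EuclideanSpace.single ⟨0, hdpos⟩ (1:ℝ) with hu'
    have hu : ‖u‖ = 1 := by rw [hu', EuclideanSpace.norm_single]; exact norm_one
    have hmem : ∀ s : ℝ, |s| < r → xin + s • u ∈ T := by
      intro s hs
      apply hball
      rw [Metric.mem_ball, dist_eq_norm]
      simpa [norm_smul, hu] using hs
    have hp1 : xin + t • u ∈ T := hmem t (by rwa [abs_of_nonneg ht0])
    have hp2 : xin + (-t) • u ∈ T := hmem (-t) (by rwa [abs_neg, abs_of_nonneg ht0])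
    have hdist := Metric.dist_le_diam_of_mem hbdd hp1 hp2
    rw [dist_eq_norm, show (xin + t • u) - (xin + (-t) • u) = (2*t) • u by module] at hdist
    rw [norm_smul, hu, mul_one, Real.norm_eq_abs, abs_of_nonneg (by linarith)] at hdist
    linarith
  have hh0 : 0 < h := lt_of_lt_of_le (by linarith) h2r
  have hhr : h ≤ 2*ρ*r := by nlinarith
  -- substituted polynomial
  set g : Fin d → MvPolynomial (Fin d) ℝ :=
    fun i => MvPolynomial.C (xin i) + MvPolynomial.C r * MvPolynomial.X i with hg
  have hgdeg : ∀ i, (g i).totalDegree ≤ 1 := by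
    intro i
    refine (totalDegree_add _ _).trans (max_le (by simp [hg, totalDegree_C]) ?_)
    refine (totalDegree_mul _ _).trans ?_
    simp [totalDegree_C, totalDegree_X]
  set w : MvPolynomial (Fin d) ℝ := bind₁ g v with hw
  have hwdeg : w.totalDegree ≤ k := (tdb g hgdeg v).trans hv
  have hweval : ∀ y : E, eval (fun i => y i) w = eval (fun i => xin i + r * y i) v := by
    intro y
    rw [hw, ← MvPolynomial.coe_aeval_eq_eval, ← MvPolynomial.coe_aeval_eq_eval]
    show (MvPolynomial.aeval (fun i => y i)) (bind₁ g v)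
        = (MvPolynomial.aeval (fun i => xin i + r * y i)) v
    rw [MvPolynomial.aeval_bind₁]
    have harg : (fun i => (MvPolynomial.aeval fun j => y j) (g i)) = fun i => xin i + r * y i := by
      funext i
      simp [hg]
    rw [harg]
  have hweval' : ∀ y : E, eval (fun i => y i) w = eval (fun i => (xin + r • y) i) v := by
    intro y
    rw [hweval y]
    have harg : (fun i => xin i + r * y i) = fun i => (xin + r • y) i := by
      funext i
      rfl
    rw [harg]
  set Q : ℝ := ∫ y in Metric.ball (0:E) 1, (eval (fun i => y i) w)^2 with hQdef
  have hQ0 : 0 ≤ Q := setIntegral_nonneg measurableSet_ball fun y _ => sq_nonneg _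
  -- bound on the frontier
  have hfrsub : frontier T ⊆ Metric.closedBall xc R := by
    refine (frontier_subset_closure).trans ?_
    refine (closure_mono hsub).trans ?_
    exact Metric.closure_ball_subset_closedBall
  have hbound : ∀ x ∈ frontier T, |eval (fun i => x i) v| ≤ C₀ * Q ^ ((1:ℝ)/2) := by
    intro x hx
    set y : E := r⁻¹ • (x - xin) with hy'
    have hxy : xin + r • y = x := by
      rw [hy', smul_inv_smul₀ hr.ne']
      module
    have hxc : dist x xc ≤ R := hfrsub hx
    have hxxin : ‖x - xin‖ ≤ 2*R := by
      have h1 : dist x xin ≤ dist x xc + dist xc xin := dist_triangle _ _ _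
      have h2 : dist xc xin < R := by rw [dist_comm]; exact hsub hxinT
      rw [dist_eq_norm] at h1
      linarith
    have hymem : y ∈ Metric.closedBall (0:E) (2*ρ) := by
      rw [Metric.mem_closedBall, dist_zero_right, hy', norm_smul, Real.norm_eq_abs,
        abs_of_nonneg (inv_nonneg.2 hr.le)]
      rw [inv_mul_le_iff₀ hr]
      calc ‖x - xin‖ ≤ 2*R := hxxin
        _ ≤ 2*(ρ*r) := by linarith
        _ = 2*ρ*r := by ring
        _ = r * (2*ρ) := by ring
    have heq : eval (fun i => x i) v = eval (fun i => y i) w := by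
      rw [hweval' y, hxy]
    rw [heq]
    exact href w hwdeg y hymem
  have hfr_meas : MeasurableSet (frontier T) := isClosed_frontier.measurableSet
  have hνfin : μH[(d:ℝ)-1] (frontier T) < ⊤ := lt_of_le_of_lt hμH ENNReal.ofReal_lt_top
  have hB0 : 0 ≤ C₀ * Q ^ ((1:ℝ)/2) := mul_nonneg hC₀.le (Real.rpow_nonneg hQ0 _)
  have hLHS1 : (∫ x in frontier T, (eval (fun i => x i) v)^2 ∂μH[(d:ℝ)-1])
      ≤ (C₀ * Q ^ ((1:ℝ)/2))^2 * ((μH[(d:ℝ)-1]) (frontier T)).toReal := by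
    refine le_trans (le_abs_self _) ?_
    rw [← Real.norm_eq_abs]
    refine norm_setIntegral_le_of_norm_le_const hνfin ?_
    intro x hx
    rw [Real.norm_eq_abs, abs_pow]
    exact pow_le_pow_left₀ (abs_nonneg _) (hbound x hx) 2
  have htoReal : ((μH[(d:ℝ)-1]) (frontier T)).toReal ≤ ρ₃ * h^(d-1) :=
    ENNReal.toReal_le_of_le_ofReal (mul_nonneg hρ₃.le (pow_nonneg hh0le _)) hμH
  have hLHS2 : (∫ x in frontier T, (eval (fun i => x i) v)^2 ∂μH[(d:ℝ)-1])
      ≤ (C₀ * Q ^ ((1:ℝ)/2))^2 * (ρ₃ * h^(d-1)) :=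
    hLHS1.trans (mul_le_mul_of_nonneg_left htoReal (by positivity))
  have hLHS3 : (∫ x in frontier T, (eval (fun i => x i) v)^2 ∂μH[(d:ℝ)-1]) ^ ((1:ℝ)/2)
      ≤ (C₀ * Q ^ ((1:ℝ)/2)) * Real.sqrt (ρ₃ * h^(d-1)) := by
    refine (Real.rpow_le_rpow
      (setIntegral_nonneg hfr_meas fun x _ => sq_nonneg _) hLHS2 (by norm_num)).trans_eq ?_
    rw [← Real.sqrt_eq_rpow, Real.sqrt_mul (sq_nonneg _), Real.sqrt_sq hB0]
  -- change of variables
  have hCoV : Q = (r^d)⁻¹ * ∫ x in Metric.ball xin r, (eval (fun i => x i) v)^2 := by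
    rw [hQdef]
    calc ∫ y in Metric.ball (0:E) 1, (eval (fun i => y i) w)^2
        = ∫ y in Metric.ball (0:E) 1,
            (fun z : E => (eval (fun i => (xin + z) i) v)^2) (r • y) := by
          refine setIntegral_congr_fun measurableSet_ball fun y _ => ?_
          simp only
          rw [hweval' y]
      _ = (r ^ Module.finrank ℝ E)⁻¹ •
            ∫ z in r • Metric.ball (0:E) 1, (fun z : E => (eval (fun i => (xin + z) i) v)^2) z :=
          Measure.setIntegral_comp_smul_of_pos (volume : Measure E)
            (fun z : E => (eval (fun i => (xin + z) i) v)^2) (Metric.ball (0:E) 1) hr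
      _ = (r^d)⁻¹ * ∫ z in Metric.ball (0:E) r, (eval (fun i => (xin + z) i) v)^2 := by
          rw [smul_unitBall_of_pos hr, finrank_euclideanSpace_fin, smul_eq_mul]
      _ = (r^d)⁻¹ * ∫ x in Metric.ball xin r, (eval (fun i => x i) v)^2 := by
          congr 1
          have hmp : MeasurePreserving (fun z : E => xin + z) volume volume :=
            measurePreserving_add_left volume xin
          have hemb : MeasurableEmbedding (fun z : E => xin + z) :=
            (MeasurableEquiv.addLeft xin).measurableEmbedding
          have hpre : (fun z : E => xin + z) ⁻¹' (Metric.ball xin r) = Metric.ball (0:E) r := by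
            ext z
            simp [Metric.mem_ball, dist_eq_norm]
          have := hmp.setIntegral_preimage_emb hemb
            (fun x => (eval (fun i => x i) v)^2) (Metric.ball xin r)
          rw [hpre] at this
          exact this
  set I : ℝ := ∫ x in Metric.ball xin r, (eval (fun i => x i) v)^2 with hI
  set IT : ℝ := ∫ x in T, (eval (fun i => x i) v)^2 with hIT
  have hI0 : 0 ≤ I := setIntegral_nonneg measurableSet_ball fun x _ => sq_nonneg _
  have hintT : IntegrableOn (fun x : E => (eval (fun i => x i) v)^2) T volume := by
    have hTsub : T ⊆ Metric.closedBall xc R := hsub.trans Metric.ball_subset_closedBall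
    have : IntegrableOn (fun x : E => (eval (fun i => x i) v)^2)
        (Metric.closedBall xc R) volume :=
      ((cfe v).pow 2).continuousOn.integrableOn_compact (isCompact_closedBall _ _)
    exact this.mono_set hTsub
  have hI_le : I ≤ IT := by
    rw [hI, hIT]
    exact setIntegral_mono_set hintT (Filter.Eventually.of_forall fun x => sq_nonneg _)
      (HasSubset.Subset.eventuallyLE hball)
  -- final algebra
  have hQs : Q ^ ((1:ℝ)/2) = (Real.sqrt (r^d))⁻¹ * Real.sqrt I := by
    rw [← Real.sqrt_eq_rpow, hCoV, Real.sqrt_mul (by positivity : (0:ℝ) ≤ (r^d)⁻¹) I, Real.sqrt_inv]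
  have ha : (0:ℝ) < Real.sqrt (r^d) := Real.sqrt_pos.2 (by positivity)
  have hb : (0:ℝ) < Real.sqrt h := Real.sqrt_pos.2 hh0
  have key : Real.sqrt (h^(d-1)) * Real.sqrt h ≤ Real.sqrt ((2*ρ)^d) * Real.sqrt (r^d) := by
    rw [← Real.sqrt_mul (pow_nonneg hh0le _), ← Real.sqrt_mul (pow_nonneg (by linarith) _)]
    apply Real.sqrt_le_sqrt
    rw [← pow_succ, Nat.sub_add_cancel hdpos, ← mul_pow]
    exact pow_le_pow_left₀ hh0le hhr d
  have key2 : C₀ * (Real.sqrt ρ₃ * Real.sqrt (h^(d-1))) * Real.sqrt h ≤ C * Real.sqrt (r^d) := by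
    rw [hC]
    nlinarith [key, Real.sqrt_nonneg ρ₃, mul_le_mul_of_nonneg_left key
      (mul_nonneg hC₀.le (Real.sqrt_nonneg ρ₃))]
  have hfinal : (C₀ * Q ^ ((1:ℝ)/2)) * Real.sqrt (ρ₃ * h^(d-1)) ≤ (C / Real.sqrt h) * Real.sqrt I := by
    rw [hQs, Real.sqrt_mul hρ₃.le]
    have hG : C₀ * ((Real.sqrt (r^d))⁻¹ * Real.sqrt I) * (Real.sqrt ρ₃ * Real.sqrt (h^(d-1)))
        = C₀ * (Real.sqrt ρ₃ * Real.sqrt (h^(d-1))) * Real.sqrt I / Real.sqrt (r^d) := by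
      field_simp
    have hG2 : C / Real.sqrt h * Real.sqrt I = C * Real.sqrt I / Real.sqrt h := by ring
    rw [hG, hG2, div_le_div_iff₀ ha hb]
    nlinarith [mul_le_mul_of_nonneg_right key2 (Real.sqrt_nonneg I)]
  have hsqIT : Real.sqrt I ≤ IT ^ ((1:ℝ)/2) := by
    rw [← Real.sqrt_eq_rpow]
    exact Real.sqrt_le_sqrt hI_le
  have hCb : (0:ℝ) ≤ C / Real.sqrt h := by
    apply div_nonneg _ hb.le
    rw [hC]; positivity
  calc (∫ x in frontier T, (eval (fun i => x i) v)^2 ∂μH[(d:ℝ)-1]) ^ ((1:ℝ)/2)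
      ≤ (C₀ * Q ^ ((1:ℝ)/2)) * Real.sqrt (ρ₃ * h^(d-1)) := hLHS3
    _ ≤ (C / Real.sqrt h) * Real.sqrt I := hfinal
    _ ≤ (C / Real.sqrt h) * IT ^ ((1:ℝ)/2) := mul_le_mul_of_nonneg_left hsqIT hCb

/-- trace inverse inequality ‖v‖_{L²(∂T)} ≤ (C/√h_T)‖v‖_{L²(T)} for
polynomials of degree ≤ k on a shape-regular cell T with |∂T| ≤ ρ₃ h_T^{d-1}.
The boundary norm uses the (d-1)-dimensional Hausdorff measure on ∂T. -/
theorem stmt1 (d k : ℕ) (ρ ρ₃ : ℝ) (hρ : 1 ≤ ρ) (hρ₃ : 0 < ρ₃) :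
    ∃ C > (0 : ℝ),
      ∀ (T : Set (EuclideanSpace ℝ (Fin d))) (xin xc : EuclideanSpace ℝ (Fin d)) (r R : ℝ),
        IsOpen T → 0 < r → Metric.ball xin r ⊆ T → T ⊆ Metric.ball xc R → R ≤ ρ * r →
        μH[(d : ℝ) - 1] (frontier T) ≤ ENNReal.ofReal (ρ₃ * (Metric.diam T) ^ (d - 1)) →
        ∀ v : MvPolynomial (Fin d) ℝ, v.totalDegree ≤ k →
          (∫ x in frontier T, (MvPolynomial.eval (fun i => x i) v) ^ 2 ∂μH[(d : ℝ) - 1]) ^ ((1:ℝ)/2)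
            ≤ (C / Real.sqrt (Metric.diam T)) *
              (∫ x in T, (MvPolynomial.eval (fun i => x i) v) ^ 2) ^ ((1:ℝ)/2) := by
  rcases Nat.eq_zero_or_pos d with hd0 | hdpos
  · subst hd0
    refine ⟨1, one_pos, ?_⟩
    intro T xin xc r R hT hr hball hsub hRρ hμ v hv
    haveI : Subsingleton (EuclideanSpace ℝ (Fin 0)) := ⟨fun a b => by ext i; exact Fin.elim0 i⟩
    have hTuniv : T = Set.univ := Set.eq_univ_of_forall fun y => by
      have hy : y = xin := Subsingleton.elim y xin
      rw [hy]
      exact hball (Metric.mem_ball_self hr)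
    have hfr : frontier T = ∅ := by rw [hTuniv, frontier_univ]
    have hdiam : Metric.diam T = 0 :=
      Metric.diam_subsingleton (fun a _ b _ => Subsingleton.elim a b)
    rw [hfr, hdiam, Real.sqrt_zero, div_zero, zero_mul, Measure.restrict_empty,
      integral_zero_measure, Real.zero_rpow (by norm_num : ((1:ℝ)/2) ≠ 0)]
  · obtain ⟨C₀, hC₀, href⟩ := ref_ineq d k ρ
    exact stmt1_main d k hdpos ρ ρ₃ hρ hρ₃ C₀ hC₀ href
      (fun g hg v => totalDegree_bind1_le g hg v) cont_fe
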